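/- Let s, y ∈ ℝⁿ with s ≠ 0, s ≠ y, and let M > 1. Then the quadratic p(γ) = γ²(s−y)ᵀ(s−y) + γ(s−y)ᵀ(2y − Ms) + yᵀ(y − Ms) is strictly convex, the equation p(γ) = 0 has exactly two real solutions γ̲ < 1 < γ̄, p(γ) ≤ 0 for every γ ∈ [γ̲, γ̄], and the smaller root is given explicitly by γ̲ = [ (s−y)ᵀ(Ms − 2y) − √( M²(sᵀ(s−y))² + 4(M−1)(sᵀs · yᵀy − (yᵀs)²) ) ] / (2 (s−y)ᵀ(s−y)). -/

import Mathlib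

open RealInnerProductSpace

/-- **Roots of the quadratic `p`.** Let `s, y ∈ ℝⁿ` with `s ≠ 0`, `s ≠ y`, and `M > 1`.
Then `p(γ) = γ²(s−y)ᵀ(s−y) + γ(s−y)ᵀ(2y − Ms) + yᵀ(y − Ms)` is strictly convex,
`p(γ) = 0` has exactly two real solutions `γ̲ < 1 < γ̄`, `p(γ) ≤ 0` on `[γ̲, γ̄]`, and
`γ̲ = [(s−y)ᵀ(Ms − 2y) − √(M²(sᵀ(s−y))² + 4(M−1)(sᵀs·yᵀy − (yᵀs)²))] / (2(s−y)ᵀ(s−y))`. -/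
theorem stmt8 {n : ℕ} (s y : EuclideanSpace ℝ (Fin n)) (hs : s ≠ 0) (hsy : s ≠ y)
    (M : ℝ) (hM : 1 < M) (p : ℝ → ℝ)
    (hp : ∀ γ : ℝ, p γ =
      γ ^ 2 * ⟪s - y, s - y⟫ + γ * ⟪s - y, (2 : ℝ) • y - M • s⟫ + ⟪y, y - M • s⟫) :
    StrictConvexOn ℝ Set.univ p ∧
    ∃ γlow γhigh : ℝ, γlow < 1 ∧ 1 < γhigh ∧
      p γlow = 0 ∧ p γhigh = 0 ∧
      (∀ γ : ℝ, p γ = 0 → γ = γlow ∨ γ = γhigh) ∧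
      (∀ γ ∈ Set.Icc γlow γhigh, p γ ≤ 0) ∧
      γlow = (⟪s - y, M • s - (2 : ℝ) • y⟫ -
          Real.sqrt (M ^ 2 * ⟪s, s - y⟫ ^ 2 +
            4 * (M - 1) * (⟪s, s⟫ * ⟪y, y⟫ - ⟪y, s⟫ ^ 2))) /
        (2 * ⟪s - y, s - y⟫) := by
  set a : ℝ := ⟪s - y, s - y⟫ with ha_def
  set b : ℝ := ⟪s - y, (2 : ℝ) • y - M • s⟫ with hb_def
  set c : ℝ := ⟪y, y - M • s⟫ with hc_def
  have ha : 0 < a :=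
    lt_of_le_of_ne real_inner_self_nonneg
      (Ne.symm (inner_self_ne_zero.mpr (sub_ne_zero.mpr hsy)))
  have hA : 0 < ⟪s, s⟫ :=
    lt_of_le_of_ne real_inner_self_nonneg (Ne.symm (inner_self_ne_zero.mpr hs))
  have hsum : a + b + c = (1 - M) * ⟪s, s⟫ := by
    simp only [ha_def, hb_def, hc_def, inner_sub_left, inner_sub_right,
      real_inner_smul_left, real_inner_smul_right, real_inner_comm y s]
    ring
  have hsum' : a + b + c < 0 := by nlinarith
  set d : ℝ := b ^ 2 - 4 * a * c with hd_def
  have hd : 0 < d := by nlinarith [sq_nonneg (b + 2 * a)]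
  have hsd : Real.sqrt d ^ 2 = d := Real.sq_sqrt hd.le
  have hsdpos : 0 < Real.sqrt d := Real.sqrt_pos.mpr hd
  set γlow : ℝ := (-b - Real.sqrt d) / (2 * a) with hgl
  set γhigh : ℝ := (-b + Real.sqrt d) / (2 * a) with hgh
  have hfact : ∀ γ : ℝ, p γ = a * (γ - γlow) * (γ - γhigh) := by
    intro γ
    rw [hp γ, hgl, hgh]
    have h2a : (2 * a) ≠ 0 := by positivity
    field_simp
    linear_combination hsd
  have hlh : γlow < γhigh := by
    rw [hgl, hgh]
    exact div_lt_div_of_pos_right (by linarith) (by linarith)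
  have hp1 : p 1 < 0 := by rw [hp 1]; nlinarith
  have h1f : a * (1 - γlow) * (1 - γhigh) < 0 := by rw [← hfact 1]; exact hp1
  have hprod : (1 - γlow) * (1 - γhigh) < 0 := by
    by_contra h
    push_neg at h
    nlinarith
  have hg1 : γlow < 1 := by
    by_contra h
    push_neg at h
    nlinarith [mul_nonneg (by linarith : (0:ℝ) ≤ γlow - 1)
      (by linarith : (0:ℝ) ≤ γhigh - 1)]
  have hg2 : 1 < γhigh := by
    by_contra h
    push_neg at h
    nlinarith [mul_nonneg (by linarith : (0:ℝ) ≤ 1 - γlow)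
      (by linarith : (0:ℝ) ≤ 1 - γhigh)]
  constructor
  · refine ⟨convex_univ, ?_⟩
    intro x _ z _ hxz t u ht hu htu
    simp only [smul_eq_mul, hp]
    have hxz0 : x - z ≠ 0 := sub_ne_zero.mpr hxz
    have hxz2 : 0 < (x - z) ^ 2 := by positivity
    have hu1 : u = 1 - t := by linarith
    subst hu1
    nlinarith [mul_pos (mul_pos ht hu) (mul_pos ha hxz2)]
  · refine ⟨γlow, γhigh, hg1, hg2, ?_, ?_, ?_, ?_, ?_⟩
    · rw [hfact γlow]; ring
    · rw [hfact γhigh]; ring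
    · intro γ hγ
      rw [hfact γ] at hγ
      rcases mul_eq_zero.mp hγ with h | h
      · rcases mul_eq_zero.mp h with h' | h'
        · exact absurd h' ha.ne'
        · left; linarith [sub_eq_zero.mp h']
      · right; linarith [sub_eq_zero.mp h]
    · intro γ hγ
      rw [hfact γ]
      nlinarith [mul_nonneg (mul_nonneg ha.le (sub_nonneg.mpr hγ.1))
        (sub_nonneg.mpr hγ.2)]
    · rw [hgl]
      congr 1
      · congr 1
        · rw [hb_def]
          simp only [inner_sub_left, inner_sub_right, real_inner_smul_left,
            real_inner_smul_right, real_inner_comm y s]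
          ring
        · congr 1
          rw [hd_def, hb_def, hc_def, ha_def]
          simp only [inner_sub_left, inner_sub_right, real_inner_smul_left,
            real_inner_smul_right, real_inner_comm y s]
          ring
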